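/- Let c < d be reals, e an edge, and A ⊆ {(J,σ) : σ ∈ 𝒢(J), σ_e = +1} a measurable event such that whenever (J,σ) ∈ A and J_e ≥ c, then (J(e,y),σ) ∈ A for all y ≥ c. Then M(A ∩ {J_e ∈ [c,d]}) ≥ ν([c,d]) · M(A ∩ {J_e ≥ c}), where M = ν(dJ) μ_J with μ_J the uniform measure on the finite set 𝒢(J). -/

import Mathlib

open scoped BigOperators ENNReal
open MeasureTheory

noncomputable def spin (b : Bool) : ℝ := if b then 1 else -1

noncomputable def boundaryEnergy {V : Type*} [DecidableEq V] (G : SimpleGraph V)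
    [G.LocallyFinite] (J : V → V → ℝ) (σ : V → Bool) (A : Finset V) : ℝ :=
  ∑ x ∈ A, ∑ y ∈ (G.neighborFinset x).filter (fun y => y ∉ A),
    J x y * spin (σ x) * spin (σ y)

def IsGroundState {V : Type*} [DecidableEq V] (G : SimpleGraph V) [G.LocallyFinite]
    (J : V → V → ℝ) (σ : V → Bool) : Prop :=
  ∀ A : Finset V, 0 ≤ boundaryEnergy G J σ A

noncomputable def updateCoupling {V : Type*} [DecidableEq V] (J : V → V → ℝ) (u v : V)
    (y : ℝ) : V → V → ℝ :=
  fun x z => if s(x, z) = s(u, v) then y else J x z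

/-- The uniform probability measure on the (finite) set of ground states. -/
noncomputable def uniformGS {V : Type*} [DecidableEq V] (G : SimpleGraph V)
    [G.LocallyFinite] (J : V → V → ℝ) : Measure (V → Bool) :=
  (({σ : V → Bool | IsGroundState G J σ}.ncard : ℝ≥0∞))⁻¹ •
    (Measure.count.restrict {σ : V → Bool | IsGroundState G J σ})

lemma updateCoupling_apply {V : Type*} [DecidableEq V] (J : V → V → ℝ) (u v : V) (y : ℝ) :
    updateCoupling J u v y u v = y := if_pos rfl

lemma updateCoupling_apply' {V : Type*} [DecidableEq V] (J : V → V → ℝ) (u v : V) (y : ℝ) :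
    updateCoupling J u v y v u = y := if_pos Sym2.eq_swap

lemma updateCoupling_updateCoupling {V : Type*} [DecidableEq V] (J : V → V → ℝ) (u v : V)
    (y y' : ℝ) :
    updateCoupling (updateCoupling J u v y) u v y' = updateCoupling J u v y' := by
  funext x z
  unfold updateCoupling
  by_cases h : s(x, z) = s(u, v) <;> simp [h]

lemma updateCoupling_self {V : Type*} [DecidableEq V] (J : V → V → ℝ) (u v : V)
    (h : J u v = J v u) : updateCoupling J u v (J u v) = J := by
  funext x z
  unfold updateCoupling
  split_ifs with hxz
  · rcases Sym2.eq_iff.mp hxz with ⟨rfl, rfl⟩ | ⟨rfl, rfl⟩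
    · rfl
    · exact h
  · rfl

/-- Lemma on bringing a coupling back towards its critical value: with `μ_J` the uniform
measure on the finite set `𝒢(J)` (of `ν`-a.s. constant cardinality `N`), if
`A ⊆ {(J,σ) : σ ∈ 𝒢(J), σ_e = +1}` is stable under replacing the coupling at `e` by any
value `≥ c` whenever `J_e ≥ c`, then `M(A ∩ {J_e ∈ [c,d]}) ≥ ν_e([c,d]) M(A ∩ {J_e ≥ c})`. -/
theorem coupling_backmodify_estimate {V : Type*} [DecidableEq V] (G : SimpleGraph V)
    [G.LocallyFinite] (u v : V) (huv : G.Adj u v)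
    (ν : Measure (V → V → ℝ)) [IsProbabilityMeasure ν]
    (νe : Measure ℝ) [IsProbabilityMeasure νe]
    (hprod : MeasurePreserving
      (fun p : (V → V → ℝ) × ℝ => updateCoupling p.1 u v p.2) (ν.prod νe) ν)
    (N : ℕ) (hN : 0 < N)
    (hcard : ∀ᵐ J ∂ν, {σ : V → Bool | IsGroundState G J σ}.Finite ∧
      {σ : V → Bool | IsGroundState G J σ}.ncard = N)
    (c d : ℝ) (hcd : c < d)
    (A : Set ((V → V → ℝ) × (V → Bool))) (hA : MeasurableSet A)
    (hAgs : ∀ p ∈ A, IsGroundState G p.1 p.2 ∧ spin (p.2 u) * spin (p.2 v) = 1)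
    (hAstable : ∀ p ∈ A, c ≤ p.1 u v → ∀ y : ℝ, c ≤ y → (updateCoupling p.1 u v y, p.2) ∈ A) :
    νe (Set.Icc c d) * (∫⁻ J in {J : V → V → ℝ | c ≤ J u v},
        uniformGS G J {σ | (J, σ) ∈ A} ∂ν) ≤
      ∫⁻ J in {J : V → V → ℝ | J u v ∈ Set.Icc c d},
        uniformGS G J {σ | (J, σ) ∈ A} ∂ν := by
  classical
  set f : (V → V → ℝ) → ℝ≥0∞ := fun J => uniformGS G J {σ | (J, σ) ∈ A} with hfdef
  set T₁ : Set (V → V → ℝ) := {J | c ≤ J u v} with hT₁def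
  set T₂ : Set (V → V → ℝ) := {J | J u v ∈ Set.Icc c d} with hT₂def
  have heval : Measurable fun J : V → V → ℝ => J u v :=
    (measurable_pi_apply v).comp (measurable_pi_apply u)
  have heval' : Measurable fun J : V → V → ℝ => J v u :=
    (measurable_pi_apply u).comp (measurable_pi_apply v)
  have hT₁ : MeasurableSet T₁ := heval measurableSet_Ici
  have hT₂ : MeasurableSet T₂ := heval measurableSet_Icc
  -- ν-a.e. symmetry at the edge
  have hsym : ∀ᵐ J ∂ν, J u v = J v u := by
    have hmeas : MeasurableSet {J : V → V → ℝ | J u v = J v u} :=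
      measurableSet_eq_fun heval heval'
    have hpre : (fun p : (V → V → ℝ) × ℝ => updateCoupling p.1 u v p.2) ⁻¹'
        {J : V → V → ℝ | J u v = J v u}ᶜ = ∅ := by
      ext p
      simp [updateCoupling_apply, updateCoupling_apply']
    have h0 : ν {J : V → V → ℝ | J u v = J v u}ᶜ = 0 := by
      rw [← hprod.map_eq, Measure.map_apply hprod.measurable hmeas.compl, hpre, measure_empty]
    simpa [ae_iff, Set.compl_setOf] using h0
  have hNν : ∀ᵐ J ∂ν, {σ : V → Bool | IsGroundState G J σ}.ncard = N :=
    hcard.mono fun J h => h.2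
  have hNJy : ∀ᵐ J ∂ν, ∀ᵐ y ∂νe,
      {σ : V → Bool | IsGroundState G (updateCoupling J u v y) σ}.ncard = N :=
    Measure.ae_ae_of_ae_prod (hprod.quasiMeasurePreserving.ae hNν)
  -- measurability of sections of A
  have hSmeas : ∀ K : V → V → ℝ, MeasurableSet {σ : V → Bool | (K, σ) ∈ A} :=
    fun K => hA.preimage measurable_prodMk_left
  have happ : ∀ K : V → V → ℝ,
      f K = (({σ : V → Bool | IsGroundState G K σ}.ncard : ℝ≥0∞))⁻¹ *
        Measure.count ({σ : V → Bool | (K, σ) ∈ A} ∩ {σ | IsGroundState G K σ}) := by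
    intro K
    simp only [hfdef, uniformGS, Measure.smul_apply, smul_eq_mul,
      Measure.restrict_apply (hSmeas K)]
  -- key pointwise estimate
  have key : ∀ J : V → V → ℝ, J u v = J v u →
      {σ : V → Bool | IsGroundState G J σ}.ncard = N → J ∈ T₂ → ∀ y : ℝ,
      {σ : V → Bool | IsGroundState G (updateCoupling J u v y) σ}.ncard = N →
      T₁.indicator f (updateCoupling J u v y) ≤ f J := by
    intro J hJsym hJN hJ2 y hyN
    by_cases hy : c ≤ y
    · have hmem : updateCoupling J u v y ∈ T₁ := by
        simp only [hT₁def, Set.mem_setOf_eq, updateCoupling_apply]; exact hy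
      rw [Set.indicator_of_mem hmem]
      have hsub : {σ : V → Bool | (updateCoupling J u v y, σ) ∈ A} ⊆
          {σ : V → Bool | (J, σ) ∈ A} := by
        intro σ hσ
        have hst := hAstable _ hσ (by simpa [updateCoupling_apply] using hy) (J u v) hJ2.1
        rwa [updateCoupling_updateCoupling, updateCoupling_self J u v hJsym] at hst
      rw [happ, happ, hJN, hyN]
      refine mul_le_mul_right (measure_mono ?_) _
      rintro σ ⟨hσA, -⟩
      exact ⟨hsub hσA, (hAgs _ (hsub hσA)).1⟩
    · have hnot : updateCoupling J u v y ∉ T₁ := by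
        simp only [hT₁def, Set.mem_setOf_eq, updateCoupling_apply]; exact hy
      rw [Set.indicator_of_notMem hnot]
      exact zero_le
  -- main estimate for a fixed measurable minorant φ
  have main : ∀ φ : SimpleFunc (V → V → ℝ) ℝ≥0∞, ⇑φ ≤ T₁.indicator f →
      νe (Set.Icc c d) * φ.lintegral ν ≤ ∫⁻ J in T₂, f J ∂ν := by
    intro φ hφ
    have hφm : Measurable ⇑φ := φ.measurable
    set ψ : (V → V → ℝ) → ℝ≥0∞ := fun J => ∫⁻ y, φ (updateCoupling J u v y) ∂νe with hψdef
    have hcomp : Measurable fun p : (V → V → ℝ) × ℝ => φ (updateCoupling p.1 u v p.2) :=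
      hφm.comp hprod.measurable
    have hψm : Measurable ψ := hcomp.lintegral_prod_right'
    have hψupd : ∀ J y, ψ (updateCoupling J u v y) = ψ J := by
      intro J y
      simp only [hψdef, updateCoupling_updateCoupling]
    -- ∫ φ = ∫ ψ
    have step1 : ∫⁻ J, φ J ∂ν = ∫⁻ J, ψ J ∂ν := by
      rw [← hprod.lintegral_comp hφm, lintegral_prod _ hcomp.aemeasurable]
    -- νe I * ∫ ψ = ∫ T₂.indicator ψ
    have step2 : νe (Set.Icc c d) * ∫⁻ J, ψ J ∂ν = ∫⁻ J, T₂.indicator ψ J ∂ν := by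
      have heqfun : ∀ p : (V → V → ℝ) × ℝ,
          T₂.indicator ψ (updateCoupling p.1 u v p.2) =
            ψ p.1 * (Set.Icc c d).indicator 1 p.2 := by
        intro p
        by_cases hp : p.2 ∈ Set.Icc c d
        · have hmem : updateCoupling p.1 u v p.2 ∈ T₂ := by
            simp only [hT₂def, Set.mem_setOf_eq, updateCoupling_apply]; exact hp
          rw [Set.indicator_of_mem hmem, Set.indicator_of_mem hp, hψupd, Pi.one_apply, mul_one]
        · have hmem : updateCoupling p.1 u v p.2 ∉ T₂ := by
            simp only [hT₂def, Set.mem_setOf_eq, updateCoupling_apply]; exact hp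
          rw [Set.indicator_of_notMem hmem, Set.indicator_of_notMem hp, mul_zero]
      rw [← hprod.lintegral_comp (hψm.indicator hT₂)]
      calc νe (Set.Icc c d) * ∫⁻ J, ψ J ∂ν
          = (∫⁻ J, ψ J ∂ν) * ∫⁻ y, (Set.Icc c d).indicator 1 y ∂νe := by
            rw [lintegral_indicator_one measurableSet_Icc, mul_comm]
        _ = ∫⁻ p, ψ p.1 * (Set.Icc c d).indicator 1 p.2 ∂(ν.prod νe) := by
            rw [lintegral_prod_mul hψm.aemeasurable
              ((measurable_one.indicator measurableSet_Icc).aemeasurable)]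
        _ = ∫⁻ p : (V → V → ℝ) × ℝ,
              T₂.indicator ψ (updateCoupling p.1 u v p.2) ∂(ν.prod νe) := by
            exact (lintegral_congr fun p => (heqfun p).symm)
    -- ψ ≤ f a.e. on T₂
    have step3 : ∫⁻ J, T₂.indicator ψ J ∂ν ≤ ∫⁻ J in T₂, f J ∂ν := by
      rw [lintegral_indicator hT₂]
      refine lintegral_mono_ae ?_
      rw [ae_restrict_iff' hT₂]
      filter_upwards [hsym, hNν, hNJy] with J hJsym hJN hJy hJ2
      have hb : ∀ᵐ y ∂νe, φ (updateCoupling J u v y) ≤ f J := by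
        filter_upwards [hJy] with y hyN
        exact le_trans (hφ _) (key J hJsym hJN hJ2 y hyN)
      calc ψ J ≤ ∫⁻ _, f J ∂νe := lintegral_mono_ae hb
        _ = f J := by simp
    calc νe (Set.Icc c d) * φ.lintegral ν
        = νe (Set.Icc c d) * ∫⁻ J, φ J ∂ν := by rw [φ.lintegral_eq_lintegral]
      _ = νe (Set.Icc c d) * ∫⁻ J, ψ J ∂ν := by rw [step1]
      _ = ∫⁻ J, T₂.indicator ψ J ∂ν := step2
      _ ≤ ∫⁻ J in T₂, f J ∂ν := step3
  -- conclude by taking the supremum over simple functions below `T₁.indicator f`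
  rw [← lintegral_indicator hT₁ f, lintegral_def, ENNReal.mul_iSup]
  refine iSup_le fun φ => ?_
  rw [ENNReal.mul_iSup]
  exact iSup_le fun hφ => main φ hφ
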